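/- Let f : [0,1] → ℝ be 1-Lipschitz, and for ς > 0 and k ≥ 1 let S_f(ς;k) denote the set of indices i ∈ [0, 2^k - 1] such that f is not ς-semilinear on the dyadic interval [i/2^k, (i+1)/2^k]. For ς, ϑ > 0 and integers 0 < m < n let Y_f(ς;ϑ;m,n) be the set of k ∈ [m, n-1] with |S_f(ς;k)| ≥ ϑ 2^k. Then |Y_f(ς;ϑ;m,n)| ≤ 1/(ς² ϑ). -/

import Mathlib

open scoped Classical

/-- `badSet f ς k` is the set `S_f(ς;k)` of indices `i ∈ [0, 2^k - 1]` such that `f` is not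
`ς`-semilinear on the dyadic interval `[i/2^k, (i+1)/2^k]`. -/
noncomputable def badSet (f : ℝ → ℝ) (ς : ℝ) (k : ℕ) : Finset ℕ :=
  (Finset.range (2 ^ k)).filter (fun i =>
    ¬ |f ((2 * (i : ℝ) + 1) / 2 ^ (k + 1)) - (f ((i : ℝ) / 2 ^ k) + f (((i : ℝ) + 1) / 2 ^ k)) / 2|
        ≤ ς * ((2 : ℝ) ^ k)⁻¹)

noncomputable def En (f : ℝ → ℝ) (k : ℕ) : ℝ :=
  2 ^ k * ∑ i ∈ Finset.range (2 ^ k), (f (((i:ℝ) + 1) / 2 ^ k) - f ((i:ℝ) / 2 ^ k)) ^ 2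

lemma sum_range_two_mul (g : ℕ → ℝ) (N : ℕ) :
    ∑ j ∈ Finset.range (2 * N), g j = ∑ i ∈ Finset.range N, (g (2 * i) + g (2 * i + 1)) := by
  induction N with
  | zero => simp
  | succ N ih =>
    have h : 2 * (N + 1) = (2 * N + 1) + 1 := by ring
    rw [h, Finset.sum_range_succ, Finset.sum_range_succ, ih, Finset.sum_range_succ]
    ring

lemma En_step (f : ℝ → ℝ) (k : ℕ) :
    En f (k + 1) - En f k = 2 ^ (k + 2) * ∑ i ∈ Finset.range (2 ^ k),
      (f ((2 * (i:ℝ) + 1) / 2 ^ (k + 1)) -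
        (f ((i:ℝ) / 2 ^ k) + f (((i:ℝ) + 1) / 2 ^ k)) / 2) ^ 2 := by
  unfold En
  have h : (2:ℕ) ^ (k + 1) = 2 * 2 ^ k := by rw [pow_succ]; ring
  rw [h, sum_range_two_mul, Finset.mul_sum, Finset.mul_sum, Finset.mul_sum,
    ← Finset.sum_sub_distrib]
  apply Finset.sum_congr rfl
  intro i _
  push_cast
  have eA : 2 * (i:ℝ) / 2 ^ (k + 1) = (i:ℝ) / 2 ^ k := by
    rw [pow_succ]; field_simp
  have eB : (2 * (i:ℝ) + 1 + 1) / 2 ^ (k + 1) = ((i:ℝ) + 1) / 2 ^ k := by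
    rw [pow_succ]; field_simp; ring
  rw [eA, eB]
  ring

lemma En_nonneg (f : ℝ → ℝ) (k : ℕ) : 0 ≤ En f k := by
  unfold En; positivity

lemma En_le_one (f : ℝ → ℝ) (hf : LipschitzOnWith 1 f (Set.Icc 0 1)) (k : ℕ) :
    En f k ≤ 1 := by
  unfold En
  have hb : ∀ i ∈ Finset.range (2 ^ k),
      (f (((i:ℝ) + 1) / 2 ^ k) - f ((i:ℝ) / 2 ^ k)) ^ 2 ≤ (((2:ℝ) ^ k)⁻¹) ^ 2 := by
    intro i hi
    have hik : (i:ℝ) + 1 ≤ 2 ^ k := by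
      have := Finset.mem_range.mp hi
      have : (i:ℝ) + 1 ≤ ((2:ℕ) ^ k : ℝ) := by exact_mod_cast Nat.succ_le_of_lt this
      simpa using this
    have h2k : (0:ℝ) < 2 ^ k := by positivity
    have hx : ((i:ℝ) + 1) / 2 ^ k ∈ Set.Icc (0:ℝ) 1 := by
      constructor
      · positivity
      · rw [div_le_one h2k]; exact hik
    have hy : ((i:ℝ)) / 2 ^ k ∈ Set.Icc (0:ℝ) 1 := by
      constructor
      · positivity
      · rw [div_le_one h2k]; nlinarith [hik]
    have hd := hf.dist_le_mul _ hx _ hy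
    rw [Real.dist_eq, Real.dist_eq] at hd
    have harg : |((i:ℝ) + 1) / 2 ^ k - (i:ℝ) / 2 ^ k| = ((2:ℝ) ^ k)⁻¹ := by
      rw [div_sub_div_same, add_sub_cancel_left, abs_of_nonneg (by positivity), one_div]
    rw [harg] at hd
    have : |f (((i:ℝ) + 1) / 2 ^ k) - f ((i:ℝ) / 2 ^ k)| ≤ ((2:ℝ) ^ k)⁻¹ := by
      simpa using hd
    calc (f (((i:ℝ) + 1) / 2 ^ k) - f ((i:ℝ) / 2 ^ k)) ^ 2
        = |f (((i:ℝ) + 1) / 2 ^ k) - f ((i:ℝ) / 2 ^ k)| ^ 2 := (sq_abs _).symm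
      _ ≤ (((2:ℝ) ^ k)⁻¹) ^ 2 := by
          apply pow_le_pow_left₀ (abs_nonneg _) this
  have : (2:ℝ) ^ k * ∑ i ∈ Finset.range (2 ^ k),
      (f (((i:ℝ) + 1) / 2 ^ k) - f ((i:ℝ) / 2 ^ k)) ^ 2
      ≤ 2 ^ k * ((2 ^ k : ℕ) * (((2:ℝ) ^ k)⁻¹) ^ 2) := by
    gcongr
    calc ∑ i ∈ Finset.range (2 ^ k), (f (((i:ℝ) + 1) / 2 ^ k) - f ((i:ℝ) / 2 ^ k)) ^ 2
        ≤ ∑ _i ∈ Finset.range (2 ^ k), (((2:ℝ) ^ k)⁻¹) ^ 2 := Finset.sum_le_sum hb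
      _ = (2 ^ k : ℕ) * (((2:ℝ) ^ k)⁻¹) ^ 2 := by
          rw [Finset.sum_const, Finset.card_range, nsmul_eq_mul]
  refine this.trans ?_
  have hc : ((2 ^ k : ℕ) : ℝ) = (2:ℝ) ^ k := by push_cast; ring
  rw [hc]
  have h2k : (0:ℝ) < 2 ^ k := by positivity
  field_simp
  exact le_rfl

/-- For a 1-Lipschitz `f` on `[0,1]`, the number of dyadic scales `k ∈ [m, n-1]` at which `f`
fails to be `ς`-semilinear on at least a `ϑ`-fraction of the dyadic intervals is at most
`1/(ς² ϑ)`. -/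
theorem stmt2 (f : ℝ → ℝ) (hf : LipschitzOnWith 1 f (Set.Icc 0 1)) (ς ϑ : ℝ)
    (hς : 0 < ς) (hϑ : 0 < ϑ) (m n : ℕ) (hm : 0 < m) (hmn : m < n) :
    ((((Finset.Ico m n).filter (fun k => ϑ * 2 ^ k ≤ ((badSet f ς k).card : ℝ))).card : ℝ))
      ≤ 1 / (ς ^ 2 * ϑ) := by

  set D : ℕ → ℝ := fun k => En f (k + 1) - En f k with hD
  have hD0 : ∀ k, 0 ≤ D k := by
    intro k
    rw [hD]; simp only; rw [En_step]; positivity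
  have hDbad : ∀ k, ϑ * 2 ^ k ≤ ((badSet f ς k).card : ℝ) → 4 * (ς ^ 2 * ϑ) ≤ D k := by
    intro k hk
    have h2k : (0:ℝ) < 2 ^ k := by positivity
    have hlow : ∀ i ∈ badSet f ς k, (ς * ((2:ℝ) ^ k)⁻¹) ^ 2 ≤
        (f ((2 * (i:ℝ) + 1) / 2 ^ (k + 1)) -
          (f ((i:ℝ) / 2 ^ k) + f (((i:ℝ) + 1) / 2 ^ k)) / 2) ^ 2 := by
      intro i hi
      have hmem := Finset.mem_filter.mp hi
      have h := not_le.mp hmem.2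
      calc (ς * ((2:ℝ) ^ k)⁻¹) ^ 2
          ≤ |f ((2 * (i:ℝ) + 1) / 2 ^ (k + 1)) -
              (f ((i:ℝ) / 2 ^ k) + f (((i:ℝ) + 1) / 2 ^ k)) / 2| ^ 2 :=
            pow_le_pow_left₀ (by positivity) h.le 2
        _ = _ := sq_abs _
    have h1 : ((badSet f ς k).card : ℝ) * (ς * ((2:ℝ) ^ k)⁻¹) ^ 2 ≤
        ∑ i ∈ Finset.range (2 ^ k),
          (f ((2 * (i:ℝ) + 1) / 2 ^ (k + 1)) -
            (f ((i:ℝ) / 2 ^ k) + f (((i:ℝ) + 1) / 2 ^ k)) / 2) ^ 2 := by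
      calc ((badSet f ς k).card : ℝ) * (ς * ((2:ℝ) ^ k)⁻¹) ^ 2
          ≤ ∑ i ∈ badSet f ς k,
            (f ((2 * (i:ℝ) + 1) / 2 ^ (k + 1)) -
              (f ((i:ℝ) / 2 ^ k) + f (((i:ℝ) + 1) / 2 ^ k)) / 2) ^ 2 := by
            rw [← nsmul_eq_mul]
            exact Finset.card_nsmul_le_sum _ _ _ hlow
        _ ≤ _ := Finset.sum_le_sum_of_subset_of_nonneg (Finset.filter_subset _ _)
            (fun i _ _ => by positivity)
    have h2 : ϑ * 2 ^ k * (ς * ((2:ℝ) ^ k)⁻¹) ^ 2 ≤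
        ((badSet f ς k).card : ℝ) * (ς * ((2:ℝ) ^ k)⁻¹) ^ 2 := by
      gcongr
    have heq : (2:ℝ) ^ (k + 2) * (ϑ * 2 ^ k * (ς * ((2:ℝ) ^ k)⁻¹) ^ 2) = 4 * (ς ^ 2 * ϑ) := by
      field_simp
      ring
    rw [hD]; simp only; rw [En_step]
    calc 4 * (ς ^ 2 * ϑ) = 2 ^ (k + 2) * (ϑ * 2 ^ k * (ς * ((2:ℝ) ^ k)⁻¹) ^ 2) := heq.symm
      _ ≤ 2 ^ (k + 2) * (((badSet f ς k).card : ℝ) * (ς * ((2:ℝ) ^ k)⁻¹) ^ 2) := by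
          gcongr
      _ ≤ _ := by gcongr
  set B := (Finset.Ico m n).filter (fun k => ϑ * 2 ^ k ≤ ((badSet f ς k).card : ℝ)) with hB
  have hkey : (B.card : ℝ) * (4 * (ς ^ 2 * ϑ)) ≤ 1 := by
    calc (B.card : ℝ) * (4 * (ς ^ 2 * ϑ)) = ∑ _k ∈ B, 4 * (ς ^ 2 * ϑ) := by
          rw [Finset.sum_const, nsmul_eq_mul]
      _ ≤ ∑ k ∈ B, D k := Finset.sum_le_sum (fun k hk =>
          hDbad k (Finset.mem_filter.mp hk).2)
      _ ≤ ∑ k ∈ Finset.Ico m n, D k := Finset.sum_le_sum_of_subset_of_nonneg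
          (Finset.filter_subset _ _) (fun k _ _ => hD0 k)
      _ = En f n - En f m := by
          rw [hD, Finset.sum_Ico_eq_sub _ hmn.le, Finset.sum_range_sub, Finset.sum_range_sub]
          ring
      _ ≤ 1 := by
          have := En_le_one f hf n
          have := En_nonneg f m
          linarith
  have hpos : (0:ℝ) < ς ^ 2 * ϑ := by positivity
  rw [le_div_iff₀ hpos]
  nlinarith [(Nat.cast_nonneg B.card : (0:ℝ) ≤ B.card), hkey, hpos]
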